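/- For 0 < q < 1, z ∈ ℂ with z ≠ 0, and ℓ > 0, the function g(z;q) = Σ_{k=0}^∞ (q^{k+1}; q)_∞ q^{ℓk²} (-z)^k satisfies, for each n ∈ ℕ, g(q^{-4nℓ} z; q) = z^{2n} q^{-4n²ℓ} [θ₄(z^{-1}; q^ℓ) + r(n)] where |r(n)| ≤ 8 θ₃(|z|^{-1}; q^ℓ) [q^{n+1}/(1-q) + q^{ℓn²}/|z|^n] for n sufficiently large. -/

import Mathlib

open Complex Real Filter Function

section aux

lemma aux_prod_le_one {s : Finset ℕ} {x : ℕ → ℝ} (h0 : ∀ j, 0 ≤ x j) (h1 : ∀ j, x j ≤ 1) :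
    ∏ j ∈ s, (1 - x j) ≤ 1 :=
  Finset.prod_le_one (fun i _ => by linarith [h1 i]) (fun i _ => by linarith [h0 i])

lemma aux_one_sub_sum_le_prod {x : ℕ → ℝ} (h0 : ∀ j, 0 ≤ x j) (h1 : ∀ j, x j ≤ 1)
    (s : Finset ℕ) : 1 - ∑ j ∈ s, x j ≤ ∏ j ∈ s, (1 - x j) := by
  classical
  induction s using Finset.induction_on with
  | empty => simp
  | @insert a s ha ih =>
    rw [Finset.prod_insert ha, Finset.sum_insert ha]
    have hs : (0:ℝ) ≤ ∑ j ∈ s, x j := Finset.sum_nonneg fun j _ => h0 j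
    nlinarith [h0 a, h1 a, mul_le_mul_of_nonneg_left ih (show (0:ℝ) ≤ 1 - x a by linarith [h1 a])]

lemma hasProd_of_summable_log {x : ℕ → ℝ} (hx : ∀ j, 0 < x j)
    (h : Summable fun j => Real.log (x j)) :
    HasProd x (Real.exp (∑' j, Real.log (x j))) := by
  have h2 : Tendsto (fun s : Finset ℕ => Real.exp (∑ j ∈ s, Real.log (x j))) atTop
      (nhds (Real.exp (∑' j, Real.log (x j)))) :=
    (Real.continuous_exp.tendsto _).comp h.hasSum
  have he : ∀ s : Finset ℕ, Real.exp (∑ j ∈ s, Real.log (x j)) = ∏ j ∈ s, x j := by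
    intro s
    rw [Real.exp_sum]
    exact Finset.prod_congr rfl fun j _ => Real.exp_log (hx j)
  unfold HasProd
  simpa only [he, SummationFilter.unconditional_filter] using h2

end aux


noncomputable def Pr (q : ℝ) (k : ℕ) : ℝ := ∏' j : ℕ, (1 - q ^ (k + 1 + j))

section pr
variable {q : ℝ} (hq0 : 0 < q) (hq1 : q < 1)
include hq0 hq1

lemma fac_pos (k j : ℕ) : 0 < 1 - q ^ (k + 1 + j) := by
  have := pow_lt_one₀ hq0.le hq1 (show k + 1 + j ≠ 0 by omega)
  linarith

lemma log_summable (k : ℕ) :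
    Summable (fun j : ℕ => Real.log (1 - q ^ (k + 1 + j))) := by
  apply Summable.of_norm_bounded (g := fun j => (1 - q)⁻¹ * q ^ (k + 1) * q ^ j)
    (((summable_geometric_of_lt_one hq0.le hq1).mul_left _))
  intro j
  have hx0 : 0 < q ^ (k + 1 + j) := pow_pos hq0 _
  have hxq : q ^ (k + 1 + j) ≤ q := pow_le_of_le_one hq0.le hq1.le (by omega)
  have h1 : 0 < 1 - q ^ (k + 1 + j) := fac_pos hq0 hq1 k j
  rw [Real.norm_eq_abs, abs_of_nonpos (Real.log_nonpos (by linarith) (by linarith))]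
  rw [← Real.log_inv]
  have h2 := Real.log_le_sub_one_of_pos (inv_pos.mpr h1)
  have h3 : (1 - q ^ (k + 1 + j))⁻¹ - 1 = q ^ (k + 1 + j) * (1 - q ^ (k + 1 + j))⁻¹ := by
    field_simp
    ring
  have h4 : (1 - q ^ (k + 1 + j))⁻¹ ≤ (1 - q)⁻¹ :=
    inv_anti₀ (by linarith) (by linarith)
  have h5 : q ^ (k + 1 + j) = q ^ (k + 1) * q ^ j := by rw [← pow_add]
  nlinarith [mul_le_mul_of_nonneg_left h4 hx0.le]

lemma Pr_hasProd (k : ℕ) :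
    HasProd (fun j : ℕ => 1 - q ^ (k + 1 + j)) (Pr q k) := by
  have h := hasProd_of_summable_log (fac_pos hq0 hq1 k) (log_summable hq0 hq1 k)
  unfold Pr
  rw [h.tprod_eq]
  exact h

lemma Pr_pos (k : ℕ) : 0 < Pr q k := by
  have h := hasProd_of_summable_log (fac_pos hq0 hq1 k) (log_summable hq0 hq1 k)
  unfold Pr
  rw [h.tprod_eq]
  exact Real.exp_pos _

lemma Pr_le_one (k : ℕ) : Pr q k ≤ 1 :=
  le_of_tendsto' (Pr_hasProd hq0 hq1 k) fun s =>
    aux_prod_le_one (fun j => (pow_pos hq0 (k + 1 + j)).le)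
      (fun j => pow_le_one₀ hq0.le hq1.le)

lemma one_sub_Pr_le (k : ℕ) : 1 - Pr q k ≤ q ^ (k + 1) * (1 - q)⁻¹ := by
  have hsum : Summable (fun j : ℕ => q ^ (k + 1 + j)) := by
    have := (summable_geometric_of_lt_one hq0.le hq1).mul_left (q ^ (k + 1))
    apply this.congr
    intro j
    rw [← pow_add]
  have htsum : ∑' j : ℕ, q ^ (k + 1 + j) = q ^ (k + 1) * (1 - q)⁻¹ := by
    have h1 : ∀ j : ℕ, q ^ (k + 1 + j) = q ^ (k + 1) * q ^ j := fun j => by rw [← pow_add]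
    rw [tsum_congr h1, tsum_mul_left, tsum_geometric_of_lt_one hq0.le hq1]
  have key : 1 - q ^ (k + 1) * (1 - q)⁻¹ ≤ Pr q k := by
    apply ge_of_tendsto' (Pr_hasProd hq0 hq1 k)
    intro s
    have hle : ∑ j ∈ s, q ^ (k + 1 + j) ≤ q ^ (k + 1) * (1 - q)⁻¹ := by
      have := Summable.sum_le_tsum s (fun j _ => (pow_pos hq0 _).le) hsum
      rwa [htsum] at this
    have := aux_one_sub_sum_le_prod (x := fun j => q ^ (k + 1 + j))
      (fun j => (pow_pos hq0 _).le) (fun j => pow_le_one₀ hq0.le hq1.le) s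
    simp only at this ⊢
    linarith
  linarith

lemma Pc_eq (k : ℕ) :
    (∏' j : ℕ, (1 - (q : ℂ) ^ (k + 1 + j))) = ((Pr q k : ℝ) : ℂ) := by
  have h := (Pr_hasProd hq0 hq1 k).map Complex.ofRealHom Complex.continuous_ofReal
  have h2 : (Complex.ofRealHom ∘ fun j : ℕ => 1 - q ^ (k + 1 + j)) =
      fun j : ℕ => 1 - (q : ℂ) ^ (k + 1 + j) := by
    funext j
    simp [Complex.ofRealHom_eq_coe]
  rw [h2] at h
  exact h.tprod_eq

end pr


lemma summable_Qd {Q d : ℝ} (hQ0 : 0 < Q) (hQ1 : Q < 1) (hd : 0 < d) :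
    Summable (fun n : ℕ => Q ^ (n ^ 2) * d ^ n) := by
  apply summable_of_ratio_norm_eventually_le (r := 1 / 2) (by norm_num)
  have h : Tendsto (fun n : ℕ => Q ^ n * d) atTop (nhds 0) := by
    simpa using (tendsto_pow_atTop_nhds_zero_of_lt_one hQ0.le hQ1).mul_const d
  filter_upwards [h.eventually_lt_const (show (0:ℝ) < 1 / 2 by norm_num)] with n hn
  have hQn : Q ^ (2 * n + 1) * d ≤ Q ^ n * d :=
    mul_le_mul_of_nonneg_right (pow_le_pow_of_le_one hQ0.le hQ1.le (by omega)) hd.le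
  have hpos : (0:ℝ) < Q ^ (n ^ 2) * d ^ n := by positivity
  rw [Real.norm_eq_abs, Real.norm_eq_abs, abs_of_pos (by positivity), abs_of_pos hpos]
  have he : Q ^ ((n + 1) ^ 2) * d ^ (n + 1) = (Q ^ (2 * n + 1) * d) * (Q ^ (n ^ 2) * d ^ n) := by
    rw [show (n + 1) ^ 2 = n ^ 2 + (2 * n + 1) by ring, pow_add, pow_succ]
    ring
  rw [he]
  exact mul_le_mul_of_nonneg_right (hQn.trans hn.le) hpos.le

lemma summable_QT {Q c : ℝ} (hQ0 : 0 < Q) (hQ1 : Q < 1) (hc : 0 < c) :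
    Summable (fun m : ℤ => Q ^ (m ^ 2) * c ^ m) := by
  apply Summable.of_nat_of_neg
  · apply (summable_Qd hQ0 hQ1 hc).congr
    intro n
    rw [show ((n:ℤ) ^ 2) = ((n ^ 2 : ℕ) : ℤ) by push_cast; ring, zpow_natCast, zpow_natCast]
  · apply (summable_Qd hQ0 hQ1 (inv_pos.mpr hc)).congr
    intro n
    rw [show ((-(n:ℤ)) ^ 2) = ((n ^ 2 : ℕ) : ℤ) by push_cast; ring, zpow_natCast,
      zpow_neg, zpow_natCast, inv_pow]

noncomputable def Ffun (z w : ℂ) : ℤ → ℂ := fun m => (-1 : ℂ) ^ m * w ^ (m ^ 2) * z ^ m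

lemma abs_Ffun (z : ℂ) (Q : ℝ) (hQ : 0 ≤ Q) (m : ℤ) :
    ‖Ffun z ((Q : ℝ) : ℂ) m‖ = Q ^ (m ^ 2) * ‖z‖ ^ m := by
  unfold Ffun
  rw [norm_mul, norm_mul, norm_zpow, norm_zpow, norm_zpow]
  rw [Complex.norm_real, Real.norm_eq_abs, _root_.abs_of_nonneg hQ]
  simp

lemma neg_one_zpow_sub_two_mul (a : ℤ) (b : ℤ) : ((-1 : ℂ)) ^ (a - 2 * b) = (-1 : ℂ) ^ a := by
  rw [zpow_sub₀ (by norm_num : (-1:ℂ) ≠ 0), zpow_mul]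
  norm_num


noncomputable def Gfun (q : ℝ) (n : ℕ) (z w : ℂ) : ℤ → ℂ := fun m =>
  if 0 ≤ m + 2 * (n : ℤ) then
    ((Pr q ((m + 2 * (n : ℤ)).toNat) : ℝ) : ℂ) * ((-1 : ℂ) ^ m * w ^ (m ^ 2) * z ^ m)
  else 0

lemma key_term (q : ℝ) (hq0 : 0 < q) (hq1 : q < 1) (z : ℂ) (hz : z ≠ 0)
    (Q : ℝ) (hQ0 : 0 < Q) (n k : ℕ) :
    ((Pr q k : ℝ) : ℂ) * ((Q : ℝ) : ℂ) ^ (k ^ 2) *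
        (-(((Q : ℝ) : ℂ) ^ (-(4 * (n : ℤ))) * z)) ^ k /
        (z ^ (2 * n) * ((Q : ℝ) : ℂ) ^ (-(4 * (n : ℤ) ^ 2))) =
      Gfun q n z ((Q : ℝ) : ℂ) ((k : ℤ) - 2 * n) := by
  set w : ℂ := ((Q : ℝ) : ℂ) with hwdef
  have hw : w ≠ 0 := Complex.ofReal_ne_zero.mpr hQ0.ne'
  unfold Gfun
  rw [if_pos (by omega : (0:ℤ) ≤ (k : ℤ) - 2 * n + 2 * (n:ℤ))]
  rw [show ((k : ℤ) - 2 * (n:ℤ) + 2 * (n : ℤ)).toNat = k by omega]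
  have hm1 : ((-1 : ℂ)) ^ ((k : ℤ) - 2 * (n:ℤ)) = (-1 : ℂ) ^ (k : ℤ) := by
    rw [zpow_sub₀ (by norm_num : (-1:ℂ) ≠ 0), zpow_mul]
    norm_num
  rw [hm1]
  rw [show (-(w ^ (-(4 * (n:ℤ))) * z)) = (-1 : ℂ) * w ^ (-(4 * (n:ℤ))) * z by ring,
    mul_pow, mul_pow]
  rw [← zpow_natCast (-1 : ℂ) k, ← zpow_natCast z k, ← zpow_natCast z (2 * n),
    ← zpow_natCast w (k ^ 2), ← zpow_natCast (w ^ (-(4 * (n:ℤ)))) k, ← zpow_mul]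
  rw [show (((k:ℤ) - 2 * (n:ℤ)) ^ 2) =
    ((k ^ 2 : ℕ) : ℤ) + (-(4 * (n:ℤ)) * (k:ℤ)) - (-(4 * (n:ℤ) ^ 2)) by push_cast; ring]
  rw [zpow_sub₀ hw, zpow_add₀ hw]
  rw [show ((k:ℤ) - 2 * (n:ℤ)) = (k:ℤ) - ((2 * n : ℕ) : ℤ) by push_cast; ring,
    zpow_sub₀ hz]
  field_simp

/-- For `0 < q < 1`, `z ≠ 0`, `ℓ > 0`, the function
`g(w;q) = Σ_{k=0}^∞ (q^{k+1};q)_∞ q^{ℓk²} (-w)^k` satisfies, for all sufficiently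
large `n`, `g(q^{-4nℓ} z; q) = z^{2n} q^{-4n²ℓ} [θ₄(z⁻¹; q^ℓ) + r(n)]` with
`|r(n)| ≤ 8 θ₃(|z|⁻¹; q^ℓ) [q^{n+1}/(1-q) + q^{ℓn²}/|z|^n]`. -/
theorem stmt_18 (q : ℝ) (hq0 : 0 < q) (hq1 : q < 1) (z : ℂ) (hz : z ≠ 0)
    (l : ℝ) (hl : 0 < l) :
    ∃ N : ℕ, ∀ n : ℕ, N ≤ n → ∃ r : ℂ,
      (∑' k : ℕ, (∏' j : ℕ, (1 - (q : ℂ) ^ (k + 1 + j))) *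
          ((q ^ (l * (k : ℝ) ^ 2) : ℝ) : ℂ) *
          (-(((q ^ (-(4 * (n : ℝ) * l)) : ℝ) : ℂ) * z)) ^ k) =
        z ^ (2 * n) * ((q ^ (-(4 * (n : ℝ) ^ 2 * l)) : ℝ) : ℂ) *
          ((∑' k : ℤ, (-1 : ℂ) ^ k * (((q ^ l : ℝ) : ℂ)) ^ (k ^ 2) * (z⁻¹) ^ k) + r) ∧
      ‖r‖ ≤ 8 * (∑' k : ℤ, (q ^ l) ^ (k ^ 2) * ((‖z‖)⁻¹) ^ k) *
        (q ^ (n + 1) / (1 - q) + q ^ (l * (n : ℝ) ^ 2) / ‖z‖ ^ n) := by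
  have hQ0 : 0 < q ^ l := Real.rpow_pos_of_pos hq0 l
  have hQ1 : q ^ l < 1 := Real.rpow_lt_one hq0.le hq1 hl
  set Q : ℝ := q ^ l with hQdef
  set c : ℝ := ‖z‖ with hcdef
  have hc0 : 0 < c := norm_pos_iff.mpr hz
  have hev : ∀ᶠ m : ℕ in atTop, Q ^ m < c / 2 :=
    (tendsto_pow_atTop_nhds_zero_of_lt_one hQ0.le hQ1).eventually_lt_const (by positivity)
  obtain ⟨N, hN⟩ := eventually_atTop.mp hev
  refine ⟨N, fun n hn => ?_⟩
  have h2n : Q ^ (2 * n) ≤ c / 2 :=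
    (pow_le_pow_of_le_one hQ0.le hQ1.le (by omega)).trans (hN n hn).le
  set w : ℂ := ((Q : ℝ) : ℂ) with hwdef
  have hw : w ≠ 0 := Complex.ofReal_ne_zero.mpr hQ0.ne'
  have hAr : ∀ k : ℕ, q ^ (l * (k : ℝ) ^ 2) = Q ^ (k ^ 2) := by
    intro k
    rw [hQdef, ← Real.rpow_natCast (q ^ l) (k ^ 2), ← Real.rpow_mul hq0.le]
    congr 1
    push_cast
    ring
  have hBr : q ^ (-(4 * (n : ℝ) * l)) = Q ^ (-(4 * (n : ℤ))) := by
    rw [hQdef, ← Real.rpow_intCast (q ^ l) (-(4 * (n : ℤ))), ← Real.rpow_mul hq0.le]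
    congr 1
    push_cast
    ring
  have hCr : q ^ (-(4 * (n : ℝ) ^ 2 * l)) = Q ^ (-(4 * (n : ℤ) ^ 2)) := by
    rw [hQdef, ← Real.rpow_intCast (q ^ l) (-(4 * (n : ℤ) ^ 2)), ← Real.rpow_mul hq0.le]
    congr 1
    push_cast
    ring
  set D : ℂ := z ^ (2 * n) * ((q ^ (-(4 * (n : ℝ) ^ 2 * l)) : ℝ) : ℂ) with hDdef
  have hDD : D = z ^ (2 * n) * w ^ (-(4 * (n : ℤ) ^ 2)) := by
    rw [hDdef, hCr, hwdef, Complex.ofReal_zpow]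
  have hD : D ≠ 0 := by
    rw [hDD]
    exact mul_ne_zero (pow_ne_zero _ hz) (zpow_ne_zero _ hw)
  set S : ℂ := ∑' k : ℕ, (∏' j : ℕ, (1 - (q : ℂ) ^ (k + 1 + j))) *
      ((q ^ (l * (k : ℝ) ^ 2) : ℝ) : ℂ) *
      (-(((q ^ (-(4 * (n : ℝ) * l)) : ℝ) : ℂ) * z)) ^ k with hSdef
  set θ : ℂ := ∑' k : ℤ, (-1 : ℂ) ^ k * w ^ (k ^ 2) * (z⁻¹) ^ k with hθdef
  refine ⟨S / D - θ, ?_, ?_⟩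
  · have h1 : θ + (S / D - θ) = S / D := by ring
    rw [h1, mul_comm, div_mul_cancel₀ S hD]
  -- identification of S / D with a sum over ℤ
  have hSG : S / D = ∑' m : ℤ, Gfun q n z w m := by
    have h1 : S = ∑' k : ℕ, ((Pr q k : ℝ) : ℂ) * w ^ (k ^ 2) *
        (-(w ^ (-(4 * (n : ℤ))) * z)) ^ k := by
      rw [hSdef]
      refine tsum_congr fun k => ?_
      rw [Pc_eq hq0 hq1 k, hAr k, hBr, hwdef, Complex.ofReal_pow, Complex.ofReal_zpow]
    have h2 : S / D = ∑' k : ℕ, Gfun q n z w ((k : ℤ) - 2 * n) := by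
      rw [h1, ← tsum_div_const]
      refine tsum_congr fun k => ?_
      rw [hDD]
      exact key_term q hq0 hq1 z hz Q hQ0 n k
    rw [h2]
    have hinj : Function.Injective (fun k : ℕ => (k : ℤ) - 2 * n) := by
      intro a b hab
      simp only at hab
      omega
    have hsupp : Function.support (Gfun q n z w) ⊆
        Set.range (fun k : ℕ => (k : ℤ) - 2 * n) := by
      intro m hm
      have h0 : 0 ≤ m + 2 * (n : ℤ) := by
        by_contra hcon
        apply hm
        unfold Gfun
        rw [if_neg hcon]
      exact ⟨(m + 2 * n).toNat, by simp only; omega⟩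
    exact hinj.tsum_eq hsupp
  have hθF : θ = ∑' m : ℤ, Ffun z w m := by
    rw [hθdef, ← (Equiv.neg ℤ).tsum_eq (fun k : ℤ => (-1 : ℂ) ^ k * w ^ (k ^ 2) * (z⁻¹) ^ k)]
    refine tsum_congr fun m => ?_
    simp only [Equiv.neg_apply]
    unfold Ffun
    have e1 : ((-1 : ℂ)) ^ (-m) = (-1 : ℂ) ^ m := by
      rw [zpow_neg]
      exact inv_eq_of_mul_eq_one_right (by rw [← mul_zpow]; norm_num)
    have e2 : (z⁻¹) ^ (-m) = z ^ m := by rw [zpow_neg, inv_zpow, inv_inv]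
    rw [e1, e2, show ((-m) ^ 2 : ℤ) = m ^ 2 by ring]
  have hT : Summable (fun m : ℤ => Q ^ (m ^ 2) * c ^ m) := summable_QT hQ0 hQ1 hc0
  have habsF : ∀ m : ℤ, ‖Ffun z w m‖ = Q ^ (m ^ 2) * c ^ m := fun m =>
    abs_Ffun z Q hQ0.le m
  have hF : Summable (Ffun z w) := by
    refine Summable.of_norm (hT.congr fun m => ?_)
    rw [habsF]
  have habsG : ∀ m : ℤ, ‖Gfun q n z w m‖ ≤ Q ^ (m ^ 2) * c ^ m := by
    intro m
    unfold Gfun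
    split_ifs with h
    · rw [norm_mul, Complex.norm_real, Real.norm_eq_abs,
        show ((-1 : ℂ) ^ m * w ^ (m ^ 2) * z ^ m) = Ffun z w m from rfl, habsF m]
      have h1 : |Pr q ((m + 2 * (n : ℤ)).toNat)| ≤ 1 := by
        rw [_root_.abs_of_nonneg (Pr_pos hq0 hq1 _).le]
        exact Pr_le_one hq0 hq1 _
      exact mul_le_of_le_one_left (by positivity) h1
    · simp only [norm_zero]
      positivity
  have hG : Summable (Gfun q n z w) := by
    refine Summable.of_norm (Summable.of_nonneg_of_le (fun m => norm_nonneg _)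
      (fun m => ?_) hT)
    exact habsG m
  have hGFnorm : Summable (fun m : ℤ => ‖Gfun q n z w m - Ffun z w m‖) := by
    refine Summable.of_nonneg_of_le (fun m => norm_nonneg _) (fun m => ?_) (hT.mul_left 2)
    refine (norm_sub_le _ _).trans ?_
    rw [habsF m]
    have := habsG m
    linarith
  have hCq0 : (0:ℝ) ≤ q ^ (n + 1) * (1 - q)⁻¹ := by
    have : (0:ℝ) < 1 - q := by linarith
    positivity
  have hpoint : ∀ m : ℤ, ‖Gfun q n z w m - Ffun z w m‖ ≤
      (q ^ (n + 1) * (1 - q)⁻¹) * (Q ^ (m ^ 2) * c ^ m) +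
        (if m + (n : ℤ) < 0 then Q ^ (m ^ 2) * c ^ m else 0) := by
    intro m
    have hTm : (0:ℝ) ≤ Q ^ (m ^ 2) * c ^ m := by positivity
    have hGm : ∀ _h2 : 0 ≤ m + 2 * (n : ℤ), Gfun q n z w m - Ffun z w m =
        ((Pr q ((m + 2 * (n : ℤ)).toNat) - 1 : ℝ) : ℂ) * Ffun z w m := by
      intro h2
      unfold Gfun Ffun
      rw [if_pos h2]
      push_cast
      ring
    by_cases h1 : -(n : ℤ) ≤ m
    · have h2 : 0 ≤ m + 2 * (n : ℤ) := by omega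
      rw [hGm h2, norm_mul, Complex.norm_real, Real.norm_eq_abs, habsF,
        if_neg (by omega : ¬ m + (n : ℤ) < 0), add_zero]
      refine mul_le_mul_of_nonneg_right ?_ hTm
      have hk1 : (0:ℝ) ≤ 1 - Pr q ((m + 2 * (n : ℤ)).toNat) := by
        linarith [Pr_le_one hq0 hq1 ((m + 2 * (n : ℤ)).toNat)]
      rw [abs_sub_comm, _root_.abs_of_nonneg hk1]
      refine (one_sub_Pr_le hq0 hq1 _).trans ?_
      refine mul_le_mul_of_nonneg_right
        (pow_le_pow_of_le_one hq0.le hq1.le (by omega)) ?_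
      have : (0:ℝ) < 1 - q := by linarith
      positivity
    · rw [if_pos (by omega : m + (n : ℤ) < 0)]
      have hCqT : 0 ≤ (q ^ (n + 1) * (1 - q)⁻¹) * (Q ^ (m ^ 2) * c ^ m) :=
        mul_nonneg hCq0 hTm
      by_cases h2 : 0 ≤ m + 2 * (n : ℤ)
      · rw [hGm h2, norm_mul, Complex.norm_real, Real.norm_eq_abs, habsF]
        have hk1 : |Pr q ((m + 2 * (n : ℤ)).toNat) - 1| ≤ 1 := by
          rw [abs_sub_comm, _root_.abs_of_nonneg
            (by linarith [Pr_le_one hq0 hq1 ((m + 2 * (n : ℤ)).toNat)] :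
              (0:ℝ) ≤ 1 - Pr q ((m + 2 * (n : ℤ)).toNat))]
          linarith [Pr_pos hq0 hq1 ((m + 2 * (n : ℤ)).toNat)]
        have := mul_le_of_le_one_left hTm hk1
        linarith
      · have h0 : Gfun q n z w m = 0 := by
          unfold Gfun
          rw [if_neg h2]
        rw [h0, zero_sub, norm_neg, habsF]
        linarith
  have hs1 : Summable (fun m : ℤ => (q ^ (n + 1) * (1 - q)⁻¹) * (Q ^ (m ^ 2) * c ^ m)) :=
    hT.mul_left _
  have hs2 : Summable (fun m : ℤ => if m + (n : ℤ) < 0 then Q ^ (m ^ 2) * c ^ m else 0) := by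
    refine Summable.of_nonneg_of_le (fun m => ?_) (fun m => ?_) hT
    · split_ifs
      · positivity
      · exact le_rfl
    · split_ifs
      · exact le_rfl
      · positivity
  have key : ‖S / D - θ‖ ≤
      (q ^ (n + 1) * (1 - q)⁻¹) * (∑' m : ℤ, Q ^ (m ^ 2) * c ^ m) +
        (∑' m : ℤ, if m + (n : ℤ) < 0 then Q ^ (m ^ 2) * c ^ m else 0) := by
    rw [hSG, hθF, ← Summable.tsum_sub hG hF]
    refine (norm_tsum_le_tsum_norm hGFnorm).trans ?_
    refine (Summable.tsum_le_tsum hpoint hGFnorm (hs1.add hs2)).trans ?_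
    rw [Summable.tsum_add hs1 hs2, tsum_mul_left]
  have htail : (∑' m : ℤ, if m + (n : ℤ) < 0 then Q ^ (m ^ 2) * c ^ m else 0) ≤
      Q ^ (n ^ 2) * (c ^ n)⁻¹ := by
    have hinj2 : Function.Injective (fun j : ℕ => -(n : ℤ) - 1 - j) := by
      intro a b hab
      simp only at hab
      omega
    have hsupp2 : Function.support
        (fun m : ℤ => if m + (n : ℤ) < 0 then Q ^ (m ^ 2) * c ^ m else 0) ⊆
        Set.range (fun j : ℕ => -(n : ℤ) - 1 - j) := by
      intro m hm
      have h0 : m + (n : ℤ) < 0 := by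
        by_contra hcon
        exact hm (if_neg hcon)
      exact ⟨(-(n : ℤ) - 1 - m).toNat, by simp only; omega⟩
    rw [← hinj2.tsum_eq hsupp2]
    have hterm : ∀ j : ℕ, (if (-(n : ℤ) - 1 - (j : ℤ)) + (n : ℤ) < 0 then
        Q ^ ((-(n : ℤ) - 1 - (j : ℤ)) ^ 2) * c ^ (-(n : ℤ) - 1 - (j : ℤ)) else 0) =
        Q ^ ((n + 1 + j) ^ 2) * (c⁻¹) ^ (n + 1 + j) := by
      intro j
      rw [if_pos (by omega)]
      rw [show (-(n : ℤ) - 1 - (j : ℤ)) = -(((n + 1 + j : ℕ)) : ℤ) by push_cast; ring]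
      rw [show ((-(((n + 1 + j : ℕ)) : ℤ)) ^ 2) = (((n + 1 + j) ^ 2 : ℕ) : ℤ) by
        push_cast; ring]
      rw [zpow_natCast, zpow_neg, zpow_natCast, inv_pow]
    rw [tsum_congr hterm]
    have hhalf : Q ^ (2 * n) * c⁻¹ ≤ 1 / 2 := by
      have h' := mul_le_mul_of_nonneg_right h2n (inv_nonneg.mpr hc0.le)
      have h'' : (c / 2) * c⁻¹ = 1 / 2 := by
        rw [div_mul_eq_mul_div, mul_inv_cancel₀ hc0.ne']
      rwa [h''] at h'
    have hest : ∀ j : ℕ, Q ^ ((n + 1 + j) ^ 2) * (c⁻¹) ^ (n + 1 + j) ≤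
        (Q ^ (n ^ 2) * (c⁻¹) ^ n * (1 / 2)) * (1 / 2) ^ j := by
      intro j
      have e1 : Q ^ ((n + 1 + j) ^ 2) = Q ^ (n ^ 2) * (Q ^ (2 * n)) ^ (j + 1) *
          Q ^ ((j + 1) ^ 2) := by
        rw [← pow_mul, ← pow_add, ← pow_add]
        congr 1
        ring
      have e2 : (c⁻¹) ^ (n + 1 + j) = (c⁻¹) ^ n * (c⁻¹) ^ (j + 1) := by
        rw [← pow_add]
        congr 1
        omega
      rw [e1, e2]
      calc Q ^ (n ^ 2) * (Q ^ (2 * n)) ^ (j + 1) * Q ^ ((j + 1) ^ 2) *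
            ((c⁻¹) ^ n * (c⁻¹) ^ (j + 1))
          = (Q ^ (n ^ 2) * (c⁻¹) ^ n) * ((Q ^ (2 * n) * c⁻¹) ^ (j + 1) *
            Q ^ ((j + 1) ^ 2)) := by rw [mul_pow]; ring
        _ ≤ (Q ^ (n ^ 2) * (c⁻¹) ^ n) * ((1 / 2) ^ (j + 1) * 1) := by
            refine mul_le_mul_of_nonneg_left ?_ (by positivity)
            exact mul_le_mul (pow_le_pow_left₀ (by positivity) hhalf _)
              (pow_le_one₀ hQ0.le hQ1.le) (by positivity) (by positivity)
        _ = (Q ^ (n ^ 2) * (c⁻¹) ^ n * (1 / 2)) * (1 / 2) ^ j := by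
            rw [pow_succ]
            ring
    have hsumR : Summable (fun j : ℕ => (Q ^ (n ^ 2) * (c⁻¹) ^ n * (1 / 2)) * (1 / 2 : ℝ) ^ j) :=
      (summable_geometric_of_lt_one (by norm_num) (by norm_num)).mul_left _
    have hsumL : Summable (fun j : ℕ => Q ^ ((n + 1 + j) ^ 2) * (c⁻¹) ^ (n + 1 + j)) :=
      Summable.of_nonneg_of_le (fun j => by positivity) hest hsumR
    refine (Summable.tsum_le_tsum hest hsumL hsumR).trans ?_
    rw [tsum_mul_left, tsum_geometric_of_lt_one (by norm_num) (by norm_num), inv_pow]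
    apply le_of_eq
    rw [show ((1:ℝ) - 1/2)⁻¹ = 2 by norm_num]
    ring
  have hΘ1 : (1:ℝ) ≤ ∑' m : ℤ, Q ^ (m ^ 2) * c ^ m := by
    have h0 := Summable.le_tsum hT 0 (fun m _ => by positivity)
    simpa using h0
  have hθ₃ : (∑' k : ℤ, Q ^ (k ^ 2) * (c⁻¹) ^ k) = ∑' m : ℤ, Q ^ (m ^ 2) * c ^ m := by
    rw [← (Equiv.neg ℤ).tsum_eq (fun k : ℤ => Q ^ (k ^ 2) * (c⁻¹) ^ k)]
    refine tsum_congr fun m => ?_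
    simp only [Equiv.neg_apply]
    rw [show ((-m) ^ 2 : ℤ) = m ^ 2 by ring, zpow_neg, inv_zpow, inv_inv]
  rw [hθ₃, hAr n]
  have hQt : (0:ℝ) ≤ Q ^ (n ^ 2) * (c ^ n)⁻¹ := by positivity
  have h8 : (q ^ (n + 1) * (1 - q)⁻¹) * (∑' m : ℤ, Q ^ (m ^ 2) * c ^ m) +
      Q ^ (n ^ 2) * (c ^ n)⁻¹ ≤
      8 * (∑' m : ℤ, Q ^ (m ^ 2) * c ^ m) *
        (q ^ (n + 1) / (1 - q) + Q ^ (n ^ 2) / c ^ n) := by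
    rw [div_eq_mul_inv, div_eq_mul_inv]
    nlinarith [hΘ1, hCq0, hQt, mul_le_mul_of_nonneg_right hΘ1 hQt]
  linarith [key, htail, h8]
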